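/- Let X_1,…,X_n be i.i.d. from a distribution in the sub-exponential envelope class Λ(α,β,γ) with α ≥ 1, β > 0, γ > 1, and M_n = max(X_1,…,X_n). Then E[M_n] ≤ β(ln(κγen))^{1/α}, where κ = 1/(1 − exp(−α/β^α)). -/

import Mathlib

open MeasureTheory ProbabilityTheory Real
open scoped ENNReal NNReal

private lemma aux_bernoulli {α β : ℝ} (hα : 1 ≤ α) (hβ : 0 < β) {k₀ : ℕ} (hk₀ : 1 ≤ k₀)
    (j : ℕ) :
    ((k₀ : ℝ) / β) ^ α + α * j / β ^ α ≤ (((k₀ : ℝ) + j) / β) ^ α := by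
  have hα0 : (0:ℝ) < α := lt_of_lt_of_le one_pos hα
  have hk0 : (0:ℝ) < k₀ := by exact_mod_cast hk₀
  have hy : (0:ℝ) ≤ (k₀:ℝ) / β := by positivity
  have hs : (0:ℝ) ≤ (j:ℝ) / k₀ := by positivity
  have hbern : 1 + α * ((j:ℝ)/k₀) ≤ (1 + (j:ℝ)/k₀) ^ α :=
    one_add_mul_self_le_rpow_one_add (by linarith) hα
  have h1 : ((k₀:ℝ) + j) / β = ((k₀:ℝ)/β) * (1 + (j:ℝ)/k₀) := by field_simp
  have hk : (k₀:ℝ) ≤ (k₀:ℝ) ^ α := by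
    nth_rewrite 1 [← Real.rpow_one (k₀:ℝ)]
    exact Real.rpow_le_rpow_of_exponent_le (by exact_mod_cast hk₀) hα
  have h2 : ((k₀:ℝ)/β) ^ α * (α * ((j:ℝ)/k₀)) = (α * (j:ℝ) / β ^ α) * ((k₀:ℝ)^α / k₀) := by
    rw [Real.div_rpow hk0.le hβ.le]
    field_simp
  have h3 : (1:ℝ) ≤ (k₀:ℝ)^α / k₀ := (one_le_div hk0).mpr hk
  have h4 : (0:ℝ) ≤ α * (j:ℝ) / β ^ α :=
    div_nonneg (mul_nonneg hα0.le (Nat.cast_nonneg j)) (Real.rpow_nonneg hβ.le α)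
  have h5 : α * (j:ℝ) / β ^ α ≤ ((k₀:ℝ)/β) ^ α * (α * ((j:ℝ)/k₀)) := by
    rw [h2]
    exact le_mul_of_one_le_right h4 h3
  calc ((k₀:ℝ)/β) ^ α + α * j / β ^ α
      ≤ ((k₀:ℝ)/β) ^ α + ((k₀:ℝ)/β) ^ α * (α * ((j:ℝ)/k₀)) := by linarith
    _ = ((k₀:ℝ)/β) ^ α * (1 + α * ((j:ℝ)/k₀)) := by ring
    _ ≤ ((k₀:ℝ)/β) ^ α * (1 + (j:ℝ)/k₀) ^ α :=
        mul_le_mul_of_nonneg_left hbern (Real.rpow_nonneg hy α)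
    _ = (((k₀:ℝ)/β) * (1 + (j:ℝ)/k₀)) ^ α := (Real.mul_rpow hy (by linarith)).symm
    _ = (((k₀:ℝ) + j) / β) ^ α := by rw [← h1]

private lemma aux_shift {α β : ℝ} (hα : 1 ≤ α) (hβ : 0 < β) {k₀ : ℕ} (hk₀ : 1 ≤ k₀) (j : ℕ) :
    Real.exp (-(((k₀ + j : ℕ):ℝ) / β) ^ α)
      ≤ Real.exp (-((k₀:ℝ) / β) ^ α) * Real.exp (-(α / β ^ α)) ^ j := by
  rw [← Real.exp_nat_mul, ← Real.exp_add]
  apply Real.exp_le_exp.mpr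
  have h := aux_bernoulli hα hβ hk₀ j
  have h2 : (j:ℝ) * -(α / β ^ α) = -(α * j / β ^ α) := by ring
  push_cast
  rw [h2]
  linarith

private lemma aux_tail {α β : ℝ} (hα : 1 ≤ α) (hβ : 0 < β) {v : ℝ} (hv : 0 ≤ v) :
    Summable ({k : ℕ | v < (k:ℝ)}.indicator fun k => Real.exp (-((k:ℝ) / β) ^ α)) ∧
    ∑' k : ℕ, {k : ℕ | v < (k:ℝ)}.indicator (fun k => Real.exp (-((k:ℝ) / β) ^ α)) k
      ≤ (1 - Real.exp (-(α / β ^ α)))⁻¹ * Real.exp (-(v / β) ^ α) := by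
  have hα0 : (0:ℝ) < α := lt_of_lt_of_le one_pos hα
  set r := Real.exp (-(α / β ^ α)) with hr
  have hr0 : 0 < r := Real.exp_pos _
  have hr1 : r < 1 := by
    rw [hr, Real.exp_lt_one_iff, neg_lt_zero]
    positivity
  set k₀ := Nat.floor v + 1 with hk₀def
  have hk₀1 : 1 ≤ k₀ := by omega
  have hvk₀ : v < (k₀:ℝ) := by
    have := Nat.lt_floor_add_one v
    rw [hk₀def]; push_cast
    push_cast at this
    linarith
  have hmem : ∀ k, k₀ ≤ k → v < (k:ℝ) := fun k hk =>
    hvk₀.trans_le (by exact_mod_cast hk)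
  set f : ℕ → ℝ := fun k => Real.exp (-((k:ℝ) / β) ^ α) with hf
  set S : Set ℕ := {k : ℕ | v < (k:ℝ)} with hS
  have hinj : Function.Injective (fun j : ℕ => k₀ + j) := fun a b h => by
    simpa using h
  have hsupp : Function.support (S.indicator f) ⊆ Set.range (fun j : ℕ => k₀ + j) := by
    intro k hk
    have hkS : k ∈ S := by
      by_contra h
      exact hk (Set.indicator_of_notMem h f)
    have hvk : v < (k:ℝ) := hkS
    have hfl : Nat.floor v < k := (Nat.floor_lt hv).mpr hvk
    exact ⟨k - k₀, by simp only []; omega⟩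
  have hcomp : ∀ j : ℕ, S.indicator f (k₀ + j) = f (k₀ + j) := fun j =>
    Set.indicator_of_mem (show (k₀ + j) ∈ S from hmem _ (Nat.le_add_right _ _)) f
  have hbound : ∀ j : ℕ, f (k₀ + j) ≤ Real.exp (-((k₀:ℝ)/β)^α) * r ^ j := fun j => by
    have h := aux_shift hα hβ hk₀1 j
    rw [hf, hr]
    push_cast at h ⊢
    exact h
  have hgeom : Summable (fun j : ℕ => Real.exp (-((k₀:ℝ)/β)^α) * r ^ j) :=
    (summable_geometric_of_lt_one hr0.le hr1).mul_left _
  have hsum' : Summable (fun j : ℕ => S.indicator f (k₀ + j)) := by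
    apply Summable.of_nonneg_of_le (fun j => ?_) (fun j => ?_) hgeom
    · rw [hcomp]; exact (Real.exp_pos _).le
    · rw [hcomp]; exact hbound j
  have hsum : Summable (S.indicator f) := (hinj.summable_iff (fun x hx => Function.notMem_support.mp (fun hs => hx (hsupp hs)))).mp hsum'
  refine ⟨hsum, ?_⟩
  have heq : ∑' k, S.indicator f k = ∑' j, S.indicator f (k₀ + j) :=
    (hinj.tsum_eq hsupp).symm
  rw [heq]
  have hk₀v : (-(((k₀:ℝ))/β)^α) ≤ (-((v/β))^α) := by
    apply neg_le_neg
    apply Real.rpow_le_rpow (by positivity) _ hα0.le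
    exact (div_le_div_iff_of_pos_right hβ).mpr hvk₀.le
  calc ∑' j, S.indicator f (k₀ + j)
      ≤ ∑' j, Real.exp (-((k₀:ℝ)/β)^α) * r ^ j :=
        Summable.tsum_le_tsum (fun j => by rw [hcomp]; exact hbound j) hsum' hgeom
    _ = Real.exp (-((k₀:ℝ)/β)^α) * (1 - r)⁻¹ := by
        rw [tsum_mul_left, tsum_geometric_of_lt_one hr0.le hr1]
    _ ≤ (1 - r)⁻¹ * Real.exp (-(v/β)^α) := by
        rw [mul_comm]
        apply mul_le_mul_of_nonneg_left _ (by
          have : (0:ℝ) < 1 - r := by linarith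
          positivity)
        exact Real.exp_le_exp.mpr hk₀v

private lemma aux_integral {C : ℝ} (hC : 1 ≤ C) :
    ∫⁻ t in Set.Ioi (0:ℝ), min 1 (ENNReal.ofReal (C * Real.exp (-t)))
      ≤ ENNReal.ofReal (Real.log C + 1) := by
  have hC0 : 0 < C := lt_of_lt_of_le one_pos hC
  set s₀ := Real.log C with hs₀
  have hs₀0 : 0 ≤ s₀ := Real.log_nonneg hC
  have hunion : Set.Ioi (0:ℝ) = Set.Ioc 0 s₀ ∪ Set.Ioi s₀ := (Set.Ioc_union_Ioi_eq_Ioi hs₀0).symm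
  rw [hunion, lintegral_union measurableSet_Ioi (Set.Ioc_disjoint_Ioi le_rfl)]
  have h1 : ∫⁻ t in Set.Ioc (0:ℝ) s₀, min 1 (ENNReal.ofReal (C * Real.exp (-t)))
      ≤ ENNReal.ofReal s₀ := by
    calc ∫⁻ t in Set.Ioc (0:ℝ) s₀, min 1 (ENNReal.ofReal (C * Real.exp (-t)))
        ≤ ∫⁻ _ in Set.Ioc (0:ℝ) s₀, 1 := lintegral_mono fun t => min_le_left _ _
      _ = ENNReal.ofReal s₀ := by
          rw [setLIntegral_const, one_mul, Real.volume_Ioc, sub_zero]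
  have hint : Integrable (fun t => C * Real.exp (-t)) (volume.restrict (Set.Ioi s₀)) := by
    have h := (exp_neg_integrableOn_Ioi s₀ (b := 1) one_pos).const_mul C
    simpa [neg_one_mul] using h
  have h2 : ∫⁻ t in Set.Ioi s₀, min 1 (ENNReal.ofReal (C * Real.exp (-t))) ≤ 1 := by
    calc ∫⁻ t in Set.Ioi s₀, min 1 (ENNReal.ofReal (C * Real.exp (-t)))
        ≤ ∫⁻ t in Set.Ioi s₀, ENNReal.ofReal (C * Real.exp (-t)) :=
          lintegral_mono fun t => min_le_right _ _
      _ = ENNReal.ofReal (∫ t in Set.Ioi s₀, C * Real.exp (-t)) :=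
          (ofReal_integral_eq_lintegral_ofReal hint
            (Filter.Eventually.of_forall fun t => by positivity)).symm
      _ = 1 := by
          rw [integral_const_mul, integral_exp_neg_Ioi, hs₀, Real.exp_neg,
            Real.exp_log hC0, mul_inv_cancel₀ (ne_of_gt hC0), ENNReal.ofReal_one]
  calc _ ≤ ENNReal.ofReal s₀ + 1 := add_le_add h1 h2
    _ = ENNReal.ofReal (s₀ + 1) := by
        rw [ENNReal.ofReal_add hs₀0 zero_le_one, ENNReal.ofReal_one]
/-- Let `X_1, …, X_n` be i.i.d. positive-integer valued random
variables whose common distribution belongs to the sub-exponential envelope class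
`Λ(α,β,γ)` (i.e. `P(X = k) ≤ γ exp(-(k/β)^α)` for all `k ≥ 1`), with `α ≥ 1`, `β > 0`,
`γ > 1`, and let `M_n = max(X_1, …, X_n)`. Then
`E[M_n] ≤ β (ln (κ γ e n))^{1/α}` where `κ = 1/(1 - exp(-α/β^α))`. -/
theorem stmt15 {Ω : Type*} [MeasureSpace Ω] [IsProbabilityMeasure (ℙ : Measure Ω)]
    (α β γ : ℝ) (hα : 1 ≤ α) (hβ : 0 < β) (hγ : 1 < γ)
    (n : ℕ) (hn : 1 ≤ n) (X : Fin n → Ω → ℕ)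
    (hmeas : ∀ i, Measurable (X i))
    (hindep : iIndepFun X ℙ)
    (hident : ∀ i j, Measure.map (X i) ℙ = Measure.map (X j) ℙ)
    (hpos : ∀ i ω, 1 ≤ X i ω)
    (henv : ∀ i, ∀ k : ℕ, 1 ≤ k →
      ℙ {ω | X i ω = k} ≤ ENNReal.ofReal (γ * Real.exp (-((k : ℝ) / β) ^ α)))
    (hint : Integrable (fun ω => ⨆ i, (X i ω : ℝ)) ℙ)
    (κ : ℝ) (hκ : κ = 1 / (1 - Real.exp (-(α / β ^ α)))) :
    ∫ ω, (⨆ i, (X i ω : ℝ)) ∂ℙ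
      ≤ β * Real.log (κ * γ * Real.exp 1 * n) ^ (1 / α) := by
  classical
  haveI hne : Nonempty (Fin n) := ⟨⟨0, hn⟩⟩
  have hα0 : (0:ℝ) < α := lt_of_lt_of_le one_pos hα
  have hγ0 : (0:ℝ) < γ := lt_trans one_pos hγ
  set M : Ω → ℝ := fun ω => ⨆ i, (X i ω : ℝ) with hMdef
  have hXr : ∀ i : Fin n, Measurable (fun ω => (X i ω : ℝ)) := fun i =>
    measurable_from_top.comp (hmeas i)
  have hMmeas : Measurable M := Measurable.iSup fun i => hXr i
  have hbdd : ∀ ω, BddAbove (Set.range fun i => (X i ω : ℝ)) := fun ω =>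
    Set.Finite.bddAbove (Set.finite_range _)
  have hM0 : ∀ ω, 0 ≤ M ω := fun ω =>
    le_trans (Nat.cast_nonneg _) (le_ciSup (hbdd ω) ⟨0, hn⟩)
  -- constants
  have hexp1 : Real.exp (-(α / β ^ α)) < 1 := by
    rw [Real.exp_lt_one_iff, neg_lt_zero]
    positivity
  have hden : 0 < 1 - Real.exp (-(α / β ^ α)) := by linarith
  have hκ1 : 1 < κ := by
    rw [hκ, lt_div_iff₀ hden, one_mul]
    linarith [Real.exp_pos (-(α / β ^ α))]
  have hκ0 : (0:ℝ) < κ := lt_trans one_pos hκ1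
  have hn1 : (1:ℝ) ≤ n := by exact_mod_cast hn
  set C : ℝ := κ * γ * n with hC
  have hC1 : 1 ≤ C := by
    have h1 : (1:ℝ) ≤ κ * γ := by nlinarith
    calc (1:ℝ) = 1 * 1 := by ring
      _ ≤ κ * γ * n := mul_le_mul h1 hn1 zero_le_one (by linarith)
      _ = C := by rw [hC]
  have hC0 : 0 < C := lt_of_lt_of_le one_pos hC1
  set L : ℝ := Real.log (κ * γ * Real.exp 1 * n) with hL
  have hLeq : L = Real.log C + 1 := by
    rw [hL, hC]
    have h : κ * γ * Real.exp 1 * n = κ * γ * n * Real.exp 1 := by ring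
    rw [h, Real.log_mul (ne_of_gt (by positivity)) (Real.exp_ne_zero 1), Real.log_exp]
  have hL1 : (1:ℝ) ≤ L := by
    rw [hLeq]
    linarith [Real.log_nonneg hC1]
  -- tail bound for each X i
  have tailX : ∀ (i : Fin n) (v : ℝ), 0 ≤ v →
      ℙ {ω | v < (X i ω : ℝ)} ≤ ENNReal.ofReal
        (γ * ((1 - Real.exp (-(α / β ^ α)))⁻¹ * Real.exp (-(v / β) ^ α))) := by
    intro i v hv
    obtain ⟨hsumm, htsum⟩ := aux_tail hα hβ hv
    set S : Set ℕ := {k : ℕ | v < (k:ℝ)} with hSdef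
    set f : ℕ → ℝ := fun k => Real.exp (-((k:ℝ) / β) ^ α) with hfdef
    have hcover : {ω | v < (X i ω : ℝ)} = ⋃ k : ℕ, {ω | X i ω = k ∧ v < (k:ℝ)} := by
      ext ω
      simp only [Set.mem_setOf_eq, Set.mem_iUnion]
      constructor
      · intro h; exact ⟨X i ω, rfl, h⟩
      · rintro ⟨k, rfl, h⟩; exact h
    calc ℙ {ω | v < (X i ω : ℝ)}
        ≤ ∑' k : ℕ, ℙ {ω | X i ω = k ∧ v < (k:ℝ)} := by
          rw [hcover]; exact measure_iUnion_le _
      _ ≤ ∑' k : ℕ, ENNReal.ofReal (γ * S.indicator f k) := by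
          apply ENNReal.tsum_le_tsum
          intro k
          by_cases hk : v < (k:ℝ)
          · have hk1 : 1 ≤ k := by
              rcases Nat.eq_zero_or_pos k with h0 | h1
              · exfalso; rw [h0] at hk; simp at hk; linarith
              · exact h1
            have hsub : {ω | X i ω = k ∧ v < (k:ℝ)} ⊆ {ω | X i ω = k} := fun ω h => h.1
            have hb := (measure_mono hsub).trans (henv i k hk1)
            have hind : S.indicator f k = f k := Set.indicator_of_mem (show k ∈ S from hk) f
            rw [hind]
            exact hb
          · have hempty : {ω | X i ω = k ∧ v < (k:ℝ)} = ∅ := by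
              ext ω; simp [hk]
            rw [hempty, Set.indicator_of_notMem (show k ∉ S from hk) f]
            simp
      _ = ENNReal.ofReal (∑' k : ℕ, γ * S.indicator f k) :=
          (ENNReal.ofReal_tsum_of_nonneg
            (fun k => mul_nonneg hγ0.le
              (Set.indicator_nonneg (fun a _ => (Real.exp_pos _).le) k))
            (hsumm.mul_left γ)).symm
      _ ≤ _ := by
          rw [tsum_mul_left]
          exact ENNReal.ofReal_le_ofReal (mul_le_mul_of_nonneg_left htsum hγ0.le)
  -- tail bound for M
  have tailM : ∀ v : ℝ, 0 ≤ v →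
      ℙ {ω | v < M ω} ≤ ENNReal.ofReal (C * Real.exp (-(v / β) ^ α)) := by
    intro v hv
    have hset : {ω | v < M ω} = ⋃ i, {ω | v < (X i ω : ℝ)} := by
      ext ω
      simp only [Set.mem_setOf_eq, Set.mem_iUnion, hMdef]
      exact lt_ciSup_iff (hbdd ω)
    rw [hset]
    calc ℙ (⋃ i, {ω | v < (X i ω : ℝ)})
        ≤ ∑' i : Fin n, ℙ {ω | v < (X i ω : ℝ)} := measure_iUnion_le _
      _ ≤ ∑' _i : Fin n, ENNReal.ofReal
            (γ * ((1 - Real.exp (-(α / β ^ α)))⁻¹ * Real.exp (-(v / β) ^ α))) :=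
          ENNReal.tsum_le_tsum fun i => tailX i v hv
      _ = (n : ENNReal) * ENNReal.ofReal
            (γ * ((1 - Real.exp (-(α / β ^ α)))⁻¹ * Real.exp (-(v / β) ^ α))) := by
          rw [tsum_fintype]
          simp [Finset.sum_const, Finset.card_univ, nsmul_eq_mul]
      _ = ENNReal.ofReal (C * Real.exp (-(v / β) ^ α)) := by
          have heq : C * Real.exp (-(v / β) ^ α) =
              (n:ℝ) * (γ * ((1 - Real.exp (-(α / β ^ α)))⁻¹ * Real.exp (-(v / β) ^ α))) := by
            rw [hC, hκ]; ring
          rw [heq, ENNReal.ofReal_mul (Nat.cast_nonneg n), ENNReal.ofReal_natCast]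
  -- layer cake
  have hZmeas : Measurable fun ω => ((M ω) / β) ^ α :=
    (hMmeas.div_const β).pow measurable_const
  have layer : ∫⁻ ω, ENNReal.ofReal ((M ω / β) ^ α) ∂ℙ ≤ ENNReal.ofReal L := by
    rw [lintegral_eq_lintegral_meas_lt ℙ
      (Filter.Eventually.of_forall fun ω =>
        Real.rpow_nonneg (div_nonneg (hM0 ω) hβ.le) α) hZmeas.aemeasurable]
    calc ∫⁻ t in Set.Ioi 0, ℙ {ω | t < (M ω / β) ^ α}
        ≤ ∫⁻ t in Set.Ioi (0:ℝ), min 1 (ENNReal.ofReal (C * Real.exp (-t))) := by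
          apply setLIntegral_mono
            (measurable_const.min
              ((measurable_const.mul (Real.measurable_exp.comp measurable_neg)).ennreal_ofReal))
          intro t ht
          have ht0 : (0:ℝ) < t := ht
          refine le_min prob_le_one ?_
          have hv0 : (0:ℝ) ≤ β * t ^ α⁻¹ := by positivity
          have hseteq : {ω | t < (M ω / β) ^ α} = {ω | β * t ^ α⁻¹ < M ω} := by
            ext ω
            simp only [Set.mem_setOf_eq]
            rw [← Real.rpow_inv_lt_iff_of_pos ht0.le (div_nonneg (hM0 ω) hβ.le) hα0,
              lt_div_iff₀ hβ, mul_comm]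
          rw [hseteq]
          have hb := tailM (β * t ^ α⁻¹) hv0
          have hvt : (β * t ^ α⁻¹ / β) ^ α = t := by
            rw [mul_div_cancel_left₀ _ (ne_of_gt hβ)]
            exact Real.rpow_inv_rpow ht0.le (ne_of_gt hα0)
          rwa [hvt] at hb
      _ ≤ ENNReal.ofReal (Real.log C + 1) := aux_integral hC1
      _ = ENNReal.ofReal L := by rw [hLeq]
  -- assemble via Lᵖ monotonicity
  set p : ℝ≥0∞ := ENNReal.ofReal α with hp
  have hp_one : 1 ≤ p := by rw [hp]; exact ENNReal.one_le_ofReal.mpr hα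
  have hp0 : p ≠ 0 := by
    rw [hp]
    simp only [ne_eq, ENNReal.ofReal_eq_zero, not_le]
    exact hα0
  have hptop : p ≠ ⊤ := ENNReal.ofReal_ne_top
  have hptoReal : p.toReal = α := ENNReal.toReal_ofReal hα0.le
  have hMae : AEStronglyMeasurable M ℙ := hMmeas.aestronglyMeasurable
  have hβα0 : (0:ℝ) ≤ β ^ α := Real.rpow_nonneg hβ.le α
  have key : ∫⁻ ω, (‖M ω‖₊ : ℝ≥0∞) ^ α ∂ℙ ≤ ENNReal.ofReal (β ^ α * L) := by
    have heach : ∀ ω, (‖M ω‖₊ : ℝ≥0∞) ^ α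
        = ENNReal.ofReal (β ^ α) * ENNReal.ofReal ((M ω / β) ^ α) := by
      intro ω
      rw [← enorm_eq_nnnorm, Real.enorm_eq_ofReal (hM0 ω), ENNReal.ofReal_rpow_of_nonneg (hM0 ω) hα0.le,
        ← ENNReal.ofReal_mul hβα0]
      congr 1
      rw [Real.div_rpow (hM0 ω) hβ.le, mul_div_cancel₀]
      exact ne_of_gt (Real.rpow_pos_of_pos hβ α)
    calc ∫⁻ ω, (‖M ω‖₊ : ℝ≥0∞) ^ α ∂ℙ
        = ENNReal.ofReal (β ^ α) * ∫⁻ ω, ENNReal.ofReal ((M ω / β) ^ α) ∂ℙ := by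
          simp_rw [heach]
          exact lintegral_const_mul _ hZmeas.ennreal_ofReal
      _ ≤ ENNReal.ofReal (β ^ α) * ENNReal.ofReal L := mul_le_mul_right layer _
      _ = ENNReal.ofReal (β ^ α * L) := (ENNReal.ofReal_mul hβα0).symm
  have hsnorm : eLpNorm M 1 ℙ ≤ ENNReal.ofReal (β * L ^ (1 / α)) := by
    calc eLpNorm M 1 ℙ ≤ eLpNorm M p ℙ := eLpNorm_le_eLpNorm_of_exponent_le hp_one hMae
      _ = (∫⁻ ω, (‖M ω‖₊ : ℝ≥0∞) ^ p.toReal ∂ℙ) ^ (1 / p.toReal) :=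
          eLpNorm_eq_lintegral_rpow_enorm_toReal hp0 hptop
      _ ≤ (ENNReal.ofReal (β ^ α * L)) ^ (1 / α) := by
          rw [hptoReal]
          exact ENNReal.rpow_le_rpow key (by positivity)
      _ = ENNReal.ofReal ((β ^ α * L) ^ (1 / α)) :=
          ENNReal.ofReal_rpow_of_nonneg (mul_nonneg hβα0 (by linarith)) (by positivity)
      _ = ENNReal.ofReal (β * L ^ (1 / α)) := by
          congr 1
          rw [Real.mul_rpow hβα0 (by linarith : (0:ℝ) ≤ L), one_div,
            Real.rpow_rpow_inv hβ.le (ne_of_gt hα0)]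
  have heq1 : ∫⁻ ω, ENNReal.ofReal (M ω) ∂ℙ = eLpNorm M 1 ℙ := by
    rw [eLpNorm_one_eq_lintegral_enorm]
    apply lintegral_congr
    intro ω
    rw [Real.enorm_eq_ofReal (hM0 ω)]
  calc ∫ ω, M ω ∂ℙ
      = (∫⁻ ω, ENNReal.ofReal (M ω) ∂ℙ).toReal :=
        integral_eq_lintegral_of_nonneg_ae (Filter.Eventually.of_forall hM0) hMae
    _ = (eLpNorm M 1 ℙ).toReal := by rw [heq1]
    _ ≤ (ENNReal.ofReal (β * L ^ (1 / α))).toReal :=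
        ENNReal.toReal_mono ENNReal.ofReal_ne_top hsnorm
    _ = β * L ^ (1 / α) := ENNReal.toReal_ofReal
        (mul_nonneg hβ.le (Real.rpow_nonneg (by linarith) _))
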